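/- Let X be a projective scheme over a complete valued field k and L a very ample invertible O_X-module with continuous metric φ. Let ‖·‖ be any norm on H⁰(X, L^{⊗n}), and for a > 0 define ‖s‖_a := max{‖s‖_φ, a‖s‖} where ‖s‖_φ is the sup seminorm. Let φ_a be the quotient metric induced by ‖·‖_a. Then |·|_{φ^{(1)}}(x) ≤ |·|_{φ_a}(x) for all x ∈ X^an, and there exists a_0 > 0 such that φ_a = φ^{(1)} for all 0 < a ≤ a_0. -/

import Mathlib

theorem exists_bound_of_linear' {k : Type*} [NontriviallyNormedField k] [CompleteSpace k]
    {E F : Type*} [NormedAddCommGroup E] [NormedSpace k E] [FiniteDimensional k E]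
    [NormedAddCommGroup F] [NormedSpace k F] (f : E →ₗ[k] F) :
    ∃ C : ℝ, 0 < C ∧ ∀ v, ‖f v‖ ≤ C * ‖v‖ := by
  let g := LinearMap.toContinuousLinearMap f
  refine ⟨‖g‖ + 1, by positivity, fun v => ?_⟩
  have h1 : ‖g v‖ ≤ ‖g‖ * ‖v‖ := g.le_opNorm v
  have h2 : g v = f v := rfl
  rw [← h2]; nlinarith [norm_nonneg v, norm_nonneg g]



/-- Let `X` be a projective scheme over a complete valued field `k`, `L` a
very ample invertible `O_X`-module with continuous metric `φ`, and `N` any norm on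
`H⁰(X, L^{⊗n})`.  For `a > 0` set `‖s‖_a := max {‖s‖_φ, a · N s}` and let `φ_a` be the
quotient metric induced by `‖·‖_a`.  Then `φ⁽¹⁾ ≤ φ_a` pointwise, and there exists `a₀ > 0`
such that `φ_a = φ⁽¹⁾` for all `0 < a ≤ a₀`.

Same abstraction as in Statement 9: `X` is the set of analytic points, `Hn = H⁰(X, L^{⊗n})`,
`Ev s : X → ℝ` the coefficient function of the section `s` relative to fixed fibre
generators, `supφ s = ‖s‖_φ` the sup seminorm, and the quotient metrics are pointwise
infima with exponent `1/n`; `ψ` is the metric `φ⁽¹⁾` induced by the sup seminorm. -/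
theorem quotient_metric_of_perturbed_norm
    {k : Type*} [NontriviallyNormedField k] [CompleteSpace k]
    (X : Type*) [Nonempty X]
    (Hn : Type*) [AddCommGroup Hn] [Module k Hn] [FiniteDimensional k Hn]
    (n : ℕ) (hn : 0 < n)
    (Ev : Hn → X → ℝ)
    (hEnn : ∀ (s : Hn) (x : X), 0 ≤ Ev s x)
    (hEsmul : ∀ (c : k) (s : Hn) (x : X), Ev (c • s) x = ‖c‖ * Ev s x)
    (hEadd : ∀ (s s' : Hn) (x : X), Ev (s + s') x ≤ Ev s x + Ev s' x)
    (φ : X → ℝ) (hφ : ∀ x, 0 < φ x)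
    (hva : ∀ x : X, ∃ s : Hn, Ev s x ≠ 0)
    (supφ : Hn → ℝ)
    (hsup : ∀ s : Hn, IsLUB (Set.range fun x => Ev s x * φ x ^ n) (supφ s))
    (N : Hn → ℝ)
    (hN0 : ∀ s : Hn, N s = 0 ↔ s = 0)
    (hNsmul : ∀ (c : k) (s : Hn), N (c • s) = ‖c‖ * N s)
    (hNadd : ∀ s s' : Hn, N (s + s') ≤ N s + N s')
    (ψ : X → ℝ)
    (hψ : ∀ x : X, IsGLB
      {r : ℝ | ∃ s : Hn, Ev s x ≠ 0 ∧ r = (supφ s / Ev s x) ^ ((n : ℝ)⁻¹)} (ψ x))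
    (φa : ℝ → X → ℝ)
    (hφa : ∀ a : ℝ, 0 < a → ∀ x : X, IsGLB
      {r : ℝ | ∃ s : Hn, Ev s x ≠ 0 ∧
        r = (max (supφ s) (a * N s) / Ev s x) ^ ((n : ℝ)⁻¹)} (φa a x)) :
    (∀ a : ℝ, 0 < a → ∀ x : X, ψ x ≤ φa a x) ∧
    ∃ a₀ : ℝ, 0 < a₀ ∧ ∀ a : ℝ, 0 < a → a ≤ a₀ → ∀ x : X, φa a x = ψ x := by
  -- basic facts about Ev
  have hEneg : ∀ (s : Hn) (x : X), Ev (-s) x = Ev s x := by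
    intro s x
    have : ((-1 : k) • s) = -s := by simp
    rw [← this, hEsmul]; simp
  have hEzero : ∀ x : X, Ev 0 x = 0 := by
    intro x
    have : ((0 : k) • (0 : Hn)) = 0 := by simp
    have h := hEsmul 0 0 x
    rw [this] at h; simpa using h
  -- basic facts about supφ
  have hsup_ub : ∀ (s : Hn) (x : X), Ev s x * φ x ^ n ≤ supφ s :=
    fun s x => (hsup s).1 ⟨x, rfl⟩
  have hsup_nonneg : ∀ s : Hn, 0 ≤ supφ s := by
    intro s
    obtain ⟨x⟩ := ‹Nonempty X›
    exact le_trans (mul_nonneg (hEnn s x) (pow_nonneg (hφ x).le n)) (hsup_ub s x)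
  have hsup_zero : supφ 0 = 0 := by
    refine (hsup 0).unique ?_
    constructor
    · rintro r ⟨x, rfl⟩; simp [hEzero]
    · intro b hb
      obtain ⟨x⟩ := ‹Nonempty X›
      have := hb ⟨x, rfl⟩
      simpa [hEzero] using this
  have hsup_smul : ∀ (c : k) (s : Hn), supφ (c • s) = ‖c‖ * supφ s := by
    intro c s
    rcases eq_or_ne c 0 with rfl | hc
    · simp [hsup_zero]
    · refine (hsup (c • s)).unique ?_
      have hcn : (0 : ℝ) < ‖c‖ := norm_pos_iff.mpr hc
      constructor
      · rintro r ⟨x, rfl⟩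
        simp only [hEsmul]
        rw [mul_assoc]
        exact mul_le_mul_of_nonneg_left (hsup_ub s x) hcn.le
      · intro b hb
        have : supφ s ≤ ‖c‖⁻¹ * b := by
          refine (hsup s).2 ?_
          rintro r ⟨x, rfl⟩
          have := hb ⟨x, rfl⟩
          simp only [hEsmul] at this
          rw [mul_assoc] at this
          rw [le_inv_mul_iff₀ hcn]
          exact this
        calc ‖c‖ * supφ s ≤ ‖c‖ * (‖c‖⁻¹ * b) :=
              mul_le_mul_of_nonneg_left this hcn.le
          _ = b := by field_simp
  have hsup_add : ∀ s s' : Hn, supφ (s + s') ≤ supφ s + supφ s' := by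
    intro s s'
    refine (hsup (s + s')).2 ?_
    rintro r ⟨x, rfl⟩
    calc Ev (s + s') x * φ x ^ n ≤ (Ev s x + Ev s' x) * φ x ^ n :=
          mul_le_mul_of_nonneg_right (hEadd s s' x) (pow_nonneg (hφ x).le n)
      _ = Ev s x * φ x ^ n + Ev s' x * φ x ^ n := by ring
      _ ≤ supφ s + supφ s' := add_le_add (hsup_ub s x) (hsup_ub s' x)
  have hsup_neg : ∀ s : Hn, supφ (-s) = supφ s := by
    intro s
    have : ((-1 : k) • s) = -s := by simp
    rw [← this, hsup_smul]; simp
  have hker_Ev : ∀ t : Hn, supφ t = 0 → ∀ x : X, Ev t x = 0 := by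
    intro t ht x
    have h1 : Ev t x * φ x ^ n ≤ 0 := ht ▸ hsup_ub t x
    have h2 : 0 ≤ Ev t x * φ x ^ n := mul_nonneg (hEnn t x) (pow_nonneg (hφ x).le n)
    have h3 : Ev t x * φ x ^ n = 0 := le_antisymm h1 h2
    have h4 : φ x ^ n ≠ 0 := (pow_pos (hφ x) n).ne'
    exact (mul_eq_zero.mp h3).resolve_right h4
  -- invariance along the kernel
  have hE_shift : ∀ (w t : Hn) (x : X), supφ t = 0 → Ev (w + t) x = Ev w x := by
    intro w t x ht
    have h1 : Ev (w + t) x ≤ Ev w x := by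
      have := hEadd w t x
      rw [hker_Ev t ht x] at this; simpa using this
    have h2 : Ev w x ≤ Ev (w + t) x := by
      have := hEadd (w + t) (-t) x
      rw [hEneg, hker_Ev t ht x] at this
      simpa using this
    exact le_antisymm h1 h2
  have hsup_shift : ∀ (w t : Hn), supφ t = 0 → supφ (w + t) = supφ w := by
    intro w t ht
    have h1 : supφ (w + t) ≤ supφ w := by
      have := hsup_add w t; rw [ht] at this; simpa using this
    have h2 : supφ w ≤ supφ (w + t) := by
      have := hsup_add (w + t) (-t)
      rw [hsup_neg, ht] at this; simpa using this
    exact le_antisymm h1 h2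
  -- nonnegativity of N
  have hNzero : N 0 = 0 := (hN0 0).mpr rfl
  have hNneg : ∀ s : Hn, N (-s) = N s := by
    intro s
    have : ((-1 : k) • s) = -s := by simp
    rw [← this, hNsmul]; simp
  have hNnn : ∀ s : Hn, 0 ≤ N s := by
    intro s
    have := hNadd s (-s)
    rw [hNneg] at this
    simp only [add_neg_cancel, hNzero] at this
    linarith
  -- Part 1
  have part1 : ∀ a : ℝ, 0 < a → ∀ x : X, ψ x ≤ φa a x := by
    intro a ha x
    refine (hφa a ha x).2 ?_
    rintro r ⟨s, hs, rfl⟩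
    have hE : 0 < Ev s x := lt_of_le_of_ne (hEnn s x) (Ne.symm hs)
    have h1 : ψ x ≤ (supφ s / Ev s x) ^ ((n : ℝ)⁻¹) := (hψ x).1 ⟨s, hs, rfl⟩
    refine h1.trans ?_
    apply Real.rpow_le_rpow (div_nonneg (hsup_nonneg s) (hEnn s x))
      (by gcongr; exact le_max_left _ _)
      (by positivity)
  refine ⟨part1, ?_⟩
  -- kernel submodule
  set K : Submodule k Hn :=
    { carrier := {t | supφ t = 0}
      zero_mem' := hsup_zero
      add_mem' := by
        intro t t' ht ht'
        refine le_antisymm ?_ (hsup_nonneg _)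
        have := hsup_add t t'
        simp only [Set.mem_setOf_eq] at ht ht'
        rw [ht, ht'] at this; simpa using this
      smul_mem' := by
        intro c t ht
        simp only [Set.mem_setOf_eq] at ht ⊢
        rw [hsup_smul, ht, mul_zero] } with hK
  obtain ⟨W, hW⟩ := K.exists_isCompl
  haveI hFD : FiniteDimensional k ↥W := inferInstance
  -- the norm supφ restricted to W is a genuine norm
  have hW_norm : ∀ w : ↥W, supφ (w : Hn) = 0 → w = 0 := by
    intro w hw
    have hmem : (w : Hn) ∈ K := hw
    have : (w : Hn) = 0 := Submodule.disjoint_def.mp hW.disjoint _ hmem w.2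
    exact Subtype.ext this
  letI instW : NormedAddCommGroup ↥W := AddGroupNorm.toNormedAddCommGroup
    { toFun := fun w => supφ (w : Hn)
      map_zero' := by simpa using hsup_zero
      add_le' := fun w w' => hsup_add _ _
      neg' := fun w => hsup_neg _
      eq_zero_of_map_eq_zero' := hW_norm }
  letI instWs : NormedSpace k ↥W :=
    ⟨fun c w => le_of_eq (hsup_smul c (w : Hn))⟩
  letI instH : NormedAddCommGroup Hn := AddGroupNorm.toNormedAddCommGroup
    { toFun := N
      map_zero' := hNzero
      add_le' := hNadd
      neg' := hNneg
      eq_zero_of_map_eq_zero' := fun s => (hN0 s).mp }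
  letI instHs : NormedSpace k Hn := ⟨fun c s => le_of_eq (hNsmul c s)⟩
  obtain ⟨C, hC, hbound⟩ := exists_bound_of_linear' (k := k) W.subtype
  have hb : ∀ w : ↥W, N (w : Hn) ≤ C * supφ (w : Hn) := fun w => hbound w
  refine ⟨C⁻¹, inv_pos.mpr hC, ?_⟩
  intro a ha haC x
  refine le_antisymm ?_ (part1 a ha x)
  refine (hψ x).2 ?_
  rintro r ⟨s, hs, rfl⟩
  obtain ⟨t, w, ht, hw, hst⟩ := Submodule.codisjoint_iff_exists_add_eq.mp hW.codisjoint s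
  have htK : supφ t = 0 := ht
  have hsw : s = w + t := by rw [← hst, add_comm]
  have hEw : Ev w x = Ev s x := by rw [hsw, hE_shift w t x htK]
  have hsupw : supφ w = supφ s := by rw [hsw, hsup_shift w t htK]
  have hEw0 : Ev w x ≠ 0 := by rw [hEw]; exact hs
  have hmax : max (supφ w) (a * N w) = supφ w := by
    apply max_eq_left
    calc a * N w ≤ C⁻¹ * N w := mul_le_mul_of_nonneg_right haC (hNnn w)
      _ ≤ C⁻¹ * (C * supφ w) :=
          mul_le_mul_of_nonneg_left (hb ⟨w, hw⟩) (inv_pos.mpr hC).le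
      _ = supφ w := by field_simp
  refine (hφa a ha x).1 ⟨w, hEw0, ?_⟩
  rw [hmax, hsupw, hEw]
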